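/- Let r > 4 and for each ℓ ≥ 0 let ∂𝔠_ℓ(A) denote the set of edge-adjacent pairs (C, C′) of ℓ-cubes with |C ∩ A| ≥ |C|/2 and |C′ ∩ A| < |C′|/2. Define Q_ℓ(A) = ∑_{(C,C′) ∈ ∂𝔠_ℓ(A)} J(A ∩ Ĉ, Aᶜ ∩ Ĉ′), where Ĉ is the cube C shrunk by an outer layer of thickness 2^{r(ℓ-1)}. Then for every finite A ⊂ ℤ², ∑_{ℓ ≥ 0} Q_ℓ(A) ≤ J(A, Aᶜ). -/

import Mathlib

/-- Long-range interaction in `ℤ²`: `|x - y|^{-α}` with Euclidean distance. -/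
noncomputable def Jint2 (α : ℝ) (p q : ℤ × ℤ) : ℝ :=
  (Real.sqrt (((p.1 - q.1 : ℤ) : ℝ) ^ 2 + ((p.2 - q.2 : ℤ) : ℝ) ^ 2)) ^ (-α)

/-- The cube of side `s` in `ℤ²` with lower corner `s • x`. -/
noncomputable def cube2 (s : ℕ) (x : ℤ × ℤ) : Finset (ℤ × ℤ) :=
  Finset.Ico ((s : ℤ) * x.1) ((s : ℤ) * (x.1 + 1)) ×ˢ
    Finset.Ico ((s : ℤ) * x.2) ((s : ℤ) * (x.2 + 1))

/-- The `ℓ`-cube indexed by `x`, shrunk by an outer layer of thickness `2^{r(ℓ-1)}`. -/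
noncomputable def hatcube2 (r ℓ : ℕ) (x : ℤ × ℤ) : Finset (ℤ × ℤ) :=
  Finset.Ico ((2 ^ (r * ℓ) : ℤ) * x.1 + 2 ^ (r * ℓ) / 2 ^ r)
             ((2 ^ (r * ℓ) : ℤ) * (x.1 + 1) - 2 ^ (r * ℓ) / 2 ^ r) ×ˢ
  Finset.Ico ((2 ^ (r * ℓ) : ℤ) * x.2 + 2 ^ (r * ℓ) / 2 ^ r)
             ((2 ^ (r * ℓ) : ℤ) * (x.2 + 1) - 2 ^ (r * ℓ) / 2 ^ r)

/-- `Q_ℓ(A)`: sum over edge-boundary pairs `(C, C')` of admissible/non-admissible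
`ℓ`-cubes of the interaction between `A ∩ Ĉ` and `Aᶜ ∩ Ĉ'`. -/
noncomputable def Qlev (r : ℕ) (α : ℝ) (A : Finset (ℤ × ℤ)) (ℓ : ℕ) : ℝ :=
  ∑' x : ℤ × ℤ, ∑' x' : ℤ × ℤ,
    if |x.1 - x'.1| + |x.2 - x'.2| = 1 ∧
        (cube2 (2 ^ (r * ℓ)) x).card ≤
          2 * ((cube2 (2 ^ (r * ℓ)) x).filter (· ∈ A)).card ∧
        2 * ((cube2 (2 ^ (r * ℓ)) x').filter (· ∈ A)).card <
          (cube2 (2 ^ (r * ℓ)) x').card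
    then ∑ p ∈ (hatcube2 r ℓ x).filter (· ∈ A),
           ∑ q ∈ (hatcube2 r ℓ x').filter (· ∉ A), Jint2 α p q
    else 0

namespace Stmt11Aux

/-! ### Elementary facts about `Jint2` -/

lemma jint_nonneg (α : ℝ) (p q : ℤ × ℤ) : 0 ≤ Jint2 α p q :=
  Real.rpow_nonneg (Real.sqrt_nonneg _) _

lemma jint_summable {α : ℝ} (hα : 2 < α) (p : ℤ × ℤ) :
    Summable fun q : ℤ × ℤ => Jint2 α p q := by
  have hs := EisensteinSeries.summable_one_div_norm_rpow hα
  set e : ℤ × ℤ → (Fin 2 → ℤ) := fun q => ![p.1 - q.1, p.2 - q.2] with he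
  have hinj : Function.Injective e := by
    intro a b h
    have h0 := congrFun h 0
    have h1 := congrFun h 1
    simp only [he, Matrix.cons_val_zero, Matrix.cons_val_one, Matrix.head_cons] at h0 h1
    exact Prod.ext (by omega) (by omega)
  have hse : Summable fun q : ℤ × ℤ => ‖e q‖ ^ (-α) := hs.comp_injective hinj
  refine Summable.of_nonneg_of_le (fun q => jint_nonneg α p q) (fun q => ?_) hse
  by_cases hpq : q = p
  · subst hpq
    have : Jint2 α q q = 0 := by
      simp only [Jint2, sub_self, Int.cast_zero, ne_eq]
      rw [zero_pow (by norm_num), add_zero, Real.sqrt_zero, Real.zero_rpow (by linarith)]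
    rw [this]
    exact Real.rpow_nonneg (norm_nonneg _) _
  · have hpos : 0 < ‖e q‖ := by
      rw [norm_pos_iff]
      intro h0
      apply hpq
      have h1 := congrFun h0 0
      have h2 := congrFun h0 1
      simp only [he, Matrix.cons_val_zero, Matrix.cons_val_one, Matrix.head_cons,
        Pi.zero_apply] at h1 h2
      exact Prod.ext (by omega) (by omega)
    have hle : ‖e q‖ ≤ Real.sqrt (((p.1 - q.1 : ℤ) : ℝ) ^ 2 + ((p.2 - q.2 : ℤ) : ℝ) ^ 2) := by
      rw [pi_norm_le_iff_of_nonneg (Real.sqrt_nonneg _)]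
      intro i
      fin_cases i <;>
        simp only [he, Fin.mk_zero, Fin.mk_one, Fin.isValue, Matrix.cons_val_zero,
          Matrix.cons_val_one, Matrix.head_cons, Int.norm_eq_abs] <;>
        rw [← Real.sqrt_sq_eq_abs] <;>
        apply Real.sqrt_le_sqrt
      · nlinarith [sq_nonneg ((p.2 - q.2 : ℤ) : ℝ)]
      · nlinarith [sq_nonneg ((p.1 - q.1 : ℤ) : ℝ)]
    exact Real.rpow_le_rpow_of_nonpos hpos hle (by linarith)

/-! ### Integer division helpers -/

lemma ediv_lb {s : ℤ} (hs : 0 < s) (a : ℤ) : s * (a / s) ≤ a := by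
  have h1 := Int.mul_ediv_add_emod a s
  have h2 := Int.emod_nonneg a hs.ne'
  linarith

lemma ediv_ub {s : ℤ} (hs : 0 < s) (a : ℤ) : a < s * (a / s) + s := by
  have h1 := Int.mul_ediv_add_emod a s
  have h2 := Int.emod_lt_of_pos a hs
  linarith

lemma ediv_unique {s x a : ℤ} (hs : 0 < s) (h1 : s * x ≤ a) (h2 : a < s * x + s) :
    x = a / s := by
  have hx : x ≤ a / s := (Int.le_ediv_iff_mul_le hs).2 (by linarith [mul_comm x s])
  have hx' : ¬(x + 1 ≤ a / s) := by
    intro h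
    have h' := (Int.le_ediv_iff_mul_le hs).1 h
    nlinarith
  omega

lemma ediv_ediv {b c : ℤ} (hb : 0 < b) (hc : 0 < c) (a : ℤ) :
    a / (b * c) = a / b / c := by
  refine (ediv_unique (by positivity) ?_ ?_).symm
  · calc (b * c) * (a / b / c) = b * (c * (a / b / c)) := by ring
      _ ≤ b * (a / b) := mul_le_mul_of_nonneg_left (ediv_lb hc (a / b)) hb.le
      _ ≤ a := ediv_lb hb a
  · have h1 := ediv_ub hb a
    have h2 := ediv_ub hc (a / b)
    have h3 : a / b ≤ c * (a / b / c) + c - 1 := by linarith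
    have h4 : b * (a / b) ≤ b * (c * (a / b / c) + c - 1) :=
      mul_le_mul_of_nonneg_left h3 hb.le
    nlinarith

lemma align_lb {s m : ℤ} (hs : 0 < s) (hm : 0 < m) (a : ℤ) :
    (s * m) * (a / (s * m)) ≤ s * (a / s) := by
  rw [ediv_ediv hs hm]
  calc (s * m) * (a / s / m) = s * (m * (a / s / m)) := by ring
    _ ≤ s * (a / s) := mul_le_mul_of_nonneg_left (ediv_lb hm (a / s)) hs.le

lemma align_ub {s m : ℤ} (hs : 0 < s) (hm : 0 < m) (a : ℤ) :
    s * (a / s) + s ≤ (s * m) * (a / (s * m)) + s * m := by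
  rw [ediv_ediv hs hm]
  have h := ediv_ub hm (a / s)
  have h' : a / s + 1 ≤ m * (a / s / m) + m := by linarith
  have h2 := mul_le_mul_of_nonneg_left h' hs.le
  calc s * (a / s) + s = s * (a / s + 1) := by ring
    _ ≤ s * (m * (a / s / m) + m) := h2
    _ = (s * m) * (a / s / m) + s * m := by ring

lemma ediv_mono {s : ℤ} (hs : 0 < s) {a b : ℤ} (h : a ≤ b) : a / s ≤ b / s :=
  Int.ediv_le_ediv hs h

/-- The key 1-d geometric fact: if the `s`-intervals of `a` and `b` are adjacent
and the `s*m`-intervals of `a` and `b` are adjacent, then `a` is near the boundary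
of its `s*m`-interval, so it cannot lie in the interval shrunk by `d ≥ s`. -/
lemma cross_scale_1d {s m d : ℤ} (hs : 0 < s) (hm : 0 < m) (hd : s ≤ d)
    (a b : ℤ)
    (h1 : b / s = a / s + 1 ∨ b / s = a / s - 1)
    (h2 : b / (s * m) = a / (s * m) + 1 ∨ b / (s * m) = a / (s * m) - 1)
    (hlo : (s * m) * (a / (s * m)) + d ≤ a)
    (hhi : a < (s * m) * (a / (s * m)) + (s * m) - d) : False := by
  have hsm : 0 < s * m := mul_pos hs hm
  have ha1 := ediv_lb hs a
  have ha2 := ediv_ub hs a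
  have hb1 := ediv_lb hs b
  have hb2 := ediv_ub hs b
  have hA1 := ediv_lb hsm a
  have hA2 := ediv_ub hsm a
  have hB1 := ediv_lb hsm b
  have hB2 := ediv_ub hsm b
  have hal_a := align_lb hs hm a
  have hau_a := align_ub hs hm a
  have hal_b := align_lb hs hm b
  have hau_b := align_ub hs hm b
  rcases h1 with h1 | h1 <;> rcases h2 with h2 | h2
  · -- b/s = a/s + 1, b/S = a/S + 1
    have e1 : s * (b / s) = s * (a / s) + s := by rw [h1]; ring
    have e2 : (s * m) * (b / (s * m)) = (s * m) * (a / (s * m)) + s * m := by rw [h2]; ring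
    linarith
  · -- b/s = a/s + 1, b/S = a/S - 1
    have e1 : s * (b / s) = s * (a / s) + s := by rw [h1]; ring
    have e2 : (s * m) * (b / (s * m)) = (s * m) * (a / (s * m)) - s * m := by rw [h2]; ring
    linarith
  · -- b/s = a/s - 1, b/S = a/S + 1
    have e1 : s * (b / s) = s * (a / s) - s := by rw [h1]; ring
    have e2 : (s * m) * (b / (s * m)) = (s * m) * (a / (s * m)) + s * m := by rw [h2]; ring
    linarith
  · -- b/s = a/s - 1, b/S = a/S - 1
    have e1 : s * (b / s) = s * (a / s) - s := by rw [h1]; ring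
    have e2 : (s * m) * (b / (s * m)) = (s * m) * (a / (s * m)) - s * m := by rw [h2]; ring
    linarith

lemma adj_decomp {u1 v1 u2 v2 : ℤ} (h : |u1 - v1| + |u2 - v2| = 1) :
    (u2 = v2 ∧ (v1 = u1 + 1 ∨ v1 = u1 - 1)) ∨ (u1 = v1 ∧ (v2 = u2 + 1 ∨ v2 = u2 - 1)) := by
  rcases abs_cases (u1 - v1) with ⟨e1, f1⟩ | ⟨e1, f1⟩ <;>
    rcases abs_cases (u2 - v2) with ⟨e2, f2⟩ | ⟨e2, f2⟩ <;> rw [e1, e2] at h <;> omega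

/-- 2-d version of the key geometric fact. -/
lemma cross_scale_2d {s m d : ℤ} (hs : 0 < s) (hm : 0 < m) (hd : s ≤ d)
    (a1 a2 b1 b2 : ℤ)
    (hadj : |a1 / s - b1 / s| + |a2 / s - b2 / s| = 1)
    (hAdj : |a1 / (s * m) - b1 / (s * m)| + |a2 / (s * m) - b2 / (s * m)| = 1)
    (hlo1 : (s * m) * (a1 / (s * m)) + d ≤ a1)
    (hhi1 : a1 < (s * m) * (a1 / (s * m)) + (s * m) - d)
    (hlo2 : (s * m) * (a2 / (s * m)) + d ≤ a2)
    (hhi2 : a2 < (s * m) * (a2 / (s * m)) + (s * m) - d) : False := by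
  have hsm : 0 < s * m := mul_pos hs hm
  have key : ∀ x y : ℤ, x / s = y / s → x / (s * m) = y / (s * m) := by
    intro x y h
    rw [ediv_ediv hs hm, ediv_ediv hs hm, h]
  rcases adj_decomp hadj with ⟨hc2, hc1⟩ | ⟨hc1, hc2⟩ <;>
    rcases adj_decomp hAdj with ⟨hC2, hC1⟩ | ⟨hC1, hC2⟩
  · exact cross_scale_1d hs hm hd a1 b1 hc1 hC1 hlo1 hhi1
  · -- scale ℓ adjacency in coord 1, scale k in coord 2: but a2/s = b2/s transfers
    have := key a2 b2 hc2
    omega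
  · have := key a1 b1 hc1
    omega
  · exact cross_scale_1d hs hm hd a2 b2 hc2 hC2 hlo2 hhi2

/-! ### Cubes and indices -/

/-- The index of the scale-`ℓ` cube containing `p`. -/
def idx2 (r ℓ : ℕ) (p : ℤ × ℤ) : ℤ × ℤ :=
  (p.1 / ((2 ^ (r * ℓ) : ℕ) : ℤ), p.2 / ((2 ^ (r * ℓ) : ℕ) : ℤ))

lemma mem_cube2_iff {s : ℕ} (hs : 0 < s) {p x : ℤ × ℤ} :
    p ∈ cube2 s x ↔ x.1 = p.1 / (s : ℤ) ∧ x.2 = p.2 / (s : ℤ) := by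
  have hs' : (0 : ℤ) < (s : ℤ) := by exact_mod_cast hs
  simp only [cube2, Finset.mem_product, Finset.mem_Ico]
  constructor
  · rintro ⟨⟨h1, h2⟩, h3, h4⟩
    have e1 : (s : ℤ) * (x.1 + 1) = s * x.1 + s := by ring
    have e2 : (s : ℤ) * (x.2 + 1) = s * x.2 + s := by ring
    exact ⟨ediv_unique hs' h1 (by linarith), ediv_unique hs' h3 (by linarith)⟩
  · rintro ⟨h1, h2⟩
    rw [h1, h2]
    have u1 := ediv_ub hs' p.1
    have u2 := ediv_ub hs' p.2
    have e1 : (s : ℤ) * (p.1 / (s : ℤ) + 1) = s * (p.1 / (s : ℤ)) + s := by ring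
    have e2 : (s : ℤ) * (p.2 / (s : ℤ) + 1) = s * (p.2 / (s : ℤ)) + s := by ring
    exact ⟨⟨ediv_lb hs' p.1, by linarith⟩, ediv_lb hs' p.2, by linarith⟩

lemma hat_subset_cube {r ℓ : ℕ} {x p : ℤ × ℤ} (hp : p ∈ hatcube2 r ℓ x) :
    p ∈ cube2 (2 ^ (r * ℓ)) x := by
  have hc : ((2 ^ (r * ℓ) : ℕ) : ℤ) = 2 ^ (r * ℓ) := by push_cast; ring
  have hd : (0 : ℤ) ≤ 2 ^ (r * ℓ) / 2 ^ r :=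
    Int.ediv_nonneg (by positivity) (by positivity)
  simp only [hatcube2, cube2, Finset.mem_product, Finset.mem_Ico, hc] at hp ⊢
  obtain ⟨⟨h1, h2⟩, h3, h4⟩ := hp
  exact ⟨⟨by linarith, by linarith⟩, by linarith, by linarith⟩

lemma idx_of_mem_hat {r ℓ : ℕ} {p x : ℤ × ℤ} (h : p ∈ hatcube2 r ℓ x) :
    x = idx2 r ℓ p := by
  have hs : 0 < 2 ^ (r * ℓ) := Nat.pow_pos (by norm_num)
  obtain ⟨h1, h2⟩ := (mem_cube2_iff hs).1 (hat_subset_cube h)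
  exact Prod.ext h1 h2

/-! ### The pair predicate and pairwise interaction -/

/-- `Pp r A ℓ p q` : the pair `(p, q)` is counted at scale `ℓ`. -/
def Pp (r : ℕ) (A : Finset (ℤ × ℤ)) (ℓ : ℕ) (p q : ℤ × ℤ) : Prop :=
  p ∈ A ∧ q ∉ A ∧
  p ∈ hatcube2 r ℓ (idx2 r ℓ p) ∧ q ∈ hatcube2 r ℓ (idx2 r ℓ q) ∧
  (|(idx2 r ℓ p).1 - (idx2 r ℓ q).1| + |(idx2 r ℓ p).2 - (idx2 r ℓ q).2| = 1 ∧
    (cube2 (2 ^ (r * ℓ)) (idx2 r ℓ p)).card ≤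
      2 * ((cube2 (2 ^ (r * ℓ)) (idx2 r ℓ p)).filter (· ∈ A)).card ∧
    2 * ((cube2 (2 ^ (r * ℓ)) (idx2 r ℓ q)).filter (· ∈ A)).card <
      (cube2 (2 ^ (r * ℓ)) (idx2 r ℓ q)).card)

open Classical in
/-- The interaction of the pair `(p,q)` if it is counted at scale `ℓ`, else `0`. -/
noncomputable def T (r : ℕ) (α : ℝ) (A : Finset (ℤ × ℤ)) (ℓ : ℕ) (p q : ℤ × ℤ) : ℝ :=
  if Pp r A ℓ p q then Jint2 α p q else 0

lemma T_nonneg (r : ℕ) (α : ℝ) (A : Finset (ℤ × ℤ)) (ℓ : ℕ) (p q : ℤ × ℤ) :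
    0 ≤ T r α A ℓ p q := by
  rw [T]; split_ifs
  · exact jint_nonneg α p q
  · exact le_refl 0

lemma T_le_J (r : ℕ) {α : ℝ} (A : Finset (ℤ × ℤ)) (ℓ : ℕ) (p q : ℤ × ℤ) :
    T r α A ℓ p q ≤ Jint2 α p q := by
  rw [T]; split_ifs
  · exact le_refl _
  · exact jint_nonneg α p q

lemma T_summable (r : ℕ) {α : ℝ} (hα : 2 < α) (A : Finset (ℤ × ℤ)) (ℓ : ℕ) (p : ℤ × ℤ) :
    Summable fun q => T r α A ℓ p q :=
  Summable.of_nonneg_of_le (T_nonneg r α A ℓ p) (T_le_J r A ℓ p) (jint_summable hα p)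

/-! ### Uniqueness of the scale at which a pair is counted -/

lemma scale_unique {r : ℕ} {A : Finset (ℤ × ℤ)} {ℓ k : ℕ} (hlk : ℓ < k)
    {p q : ℤ × ℤ} (h1 : Pp r A ℓ p q) (h2 : Pp r A k p q) : False := by
  obtain ⟨-, -, -, -, hadj, -, -⟩ := h1
  obtain ⟨-, -, hhat, -, hAdj, -, -⟩ := h2
  have hcl : ((2 ^ (r * ℓ) : ℕ) : ℤ) = (2 : ℤ) ^ (r * ℓ) := by push_cast; ring
  have hck : ((2 ^ (r * k) : ℕ) : ℤ) = (2 : ℤ) ^ (r * k) := by push_cast; ring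
  set s : ℤ := (2 : ℤ) ^ (r * ℓ) with hs_def
  set m : ℤ := (2 : ℤ) ^ (r * (k - ℓ)) with hm_def
  have hs : 0 < s := by positivity
  have hm : 0 < m := by positivity
  have hS : (2 : ℤ) ^ (r * k) = s * m := by
    rw [hs_def, hm_def, ← pow_add]
    congr 1
    rw [← Nat.mul_add, Nat.add_sub_cancel' hlk.le]
  have hd : s ≤ (s * m) / 2 ^ r := by
    have h1k : r ≤ r * k := Nat.le_mul_of_pos_right r (by omega)
    have hsplit : s * m = (2 : ℤ) ^ r * 2 ^ (r * k - r) := by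
      rw [← hS, ← pow_add, Nat.add_sub_cancel' h1k]
    rw [hsplit, Int.mul_ediv_cancel_left _ (by positivity)]
    rw [hs_def]
    apply pow_le_pow_right₀ (by norm_num)
    have hmul : r * (ℓ + 1) ≤ r * k := Nat.mul_le_mul_left r hlk
    have : r * ℓ + r ≤ r * k := by
      calc r * ℓ + r = r * (ℓ + 1) := by ring
        _ ≤ r * k := hmul
    omega
  simp only [idx2, hcl, hck] at hadj hAdj hhat
  rw [hS] at hAdj
  simp only [hatcube2, Finset.mem_product, Finset.mem_Ico] at hhat
  rw [hS] at hhat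
  obtain ⟨⟨hl1, hh1⟩, hl2, hh2⟩ := hhat
  refine cross_scale_2d hs hm hd p.1 p.2 q.1 q.2 hadj hAdj hl1 ?_ hl2 ?_
  · have : s * m * (p.1 / (s * m) + 1) = (s * m) * (p.1 / (s * m)) + s * m := by ring
    linarith
  · have : s * m * (p.2 / (s * m) + 1) = (s * m) * (p.2 / (s * m)) + s * m := by ring
    linarith

/-! ### Rewriting `Qlev` -/

/-- The summand of `Qlev`, as a function. -/
noncomputable def Fq (r : ℕ) (α : ℝ) (A : Finset (ℤ × ℤ)) (ℓ : ℕ) (x x' : ℤ × ℤ) : ℝ :=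
  if |x.1 - x'.1| + |x.2 - x'.2| = 1 ∧
      (cube2 (2 ^ (r * ℓ)) x).card ≤
        2 * ((cube2 (2 ^ (r * ℓ)) x).filter (· ∈ A)).card ∧
      2 * ((cube2 (2 ^ (r * ℓ)) x').filter (· ∈ A)).card <
        (cube2 (2 ^ (r * ℓ)) x').card
  then ∑ p ∈ (hatcube2 r ℓ x).filter (· ∈ A),
         ∑ q ∈ (hatcube2 r ℓ x').filter (· ∉ A), Jint2 α p q
  else 0

lemma Qlev_eq_Fq (r : ℕ) (α : ℝ) (A : Finset (ℤ × ℤ)) (ℓ : ℕ) :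
    Qlev r α A ℓ = ∑' x : ℤ × ℤ, ∑' x' : ℤ × ℤ, Fq r α A ℓ x x' := rfl

lemma Fq_nonneg (r : ℕ) (α : ℝ) (A : Finset (ℤ × ℤ)) (ℓ : ℕ) (x x' : ℤ × ℤ) :
    0 ≤ Fq r α A ℓ x x' := by
  rw [Fq]; split_ifs
  · exact Finset.sum_nonneg fun p _ => Finset.sum_nonneg fun q _ => jint_nonneg α p q
  · exact le_refl 0

lemma Qlev_nonneg (r : ℕ) (α : ℝ) (A : Finset (ℤ × ℤ)) (ℓ : ℕ) : 0 ≤ Qlev r α A ℓ := by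
  rw [Qlev_eq_Fq]
  exact tsum_nonneg fun x => tsum_nonneg fun x' => Fq_nonneg r α A ℓ x x'

/-- The possible neighbours of a cube index. -/
def nbrs (x : ℤ × ℤ) : Finset (ℤ × ℤ) :=
  {(x.1 + 1, x.2), (x.1 - 1, x.2), (x.1, x.2 + 1), (x.1, x.2 - 1)}

lemma mem_nbrs_of_adj {x x' : ℤ × ℤ} (h : |x.1 - x'.1| + |x.2 - x'.2| = 1) :
    x' ∈ nbrs x := by
  have hd := adj_decomp h
  simp only [nbrs, Finset.mem_insert, Finset.mem_singleton, Prod.ext_iff]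
  omega

/-- `Gq` : the contribution of a single point `p` to the pair `(x, x')` of cubes. -/
noncomputable def Gq (r : ℕ) (α : ℝ) (A : Finset (ℤ × ℤ)) (ℓ : ℕ) (p x x' : ℤ × ℤ) : ℝ :=
  if p ∈ hatcube2 r ℓ x then
    ∑ q ∈ (hatcube2 r ℓ x').filter (· ∉ A), T r α A ℓ p q
  else 0

lemma Gq_nonneg (r : ℕ) (α : ℝ) (A : Finset (ℤ × ℤ)) (ℓ : ℕ) (p x x' : ℤ × ℤ) :
    0 ≤ Gq r α A ℓ p x x' := by
  rw [Gq]; split_ifs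
  · exact Finset.sum_nonneg fun q _ => T_nonneg r α A ℓ p q
  · exact le_refl 0

lemma Fq_eq_sum (r : ℕ) (α : ℝ) (A : Finset (ℤ × ℤ)) (ℓ : ℕ) (x x' : ℤ × ℤ) :
    Fq r α A ℓ x x' = ∑ p ∈ A, Gq r α A ℓ p x x' := by
  classical
  have hsum : ∀ p : ℤ × ℤ, Gq r α A ℓ p x x' =
      if p ∈ hatcube2 r ℓ x then
        ∑ q ∈ (hatcube2 r ℓ x').filter (· ∉ A), T r α A ℓ p q
      else 0 := fun p => rfl
  have hswap : (A.filter (· ∈ hatcube2 r ℓ x)) = (hatcube2 r ℓ x).filter (· ∈ A) := by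
    ext z
    simp only [Finset.mem_filter]
    exact and_comm
  have hGsum : ∑ p ∈ A, Gq r α A ℓ p x x' =
      ∑ p ∈ (hatcube2 r ℓ x).filter (· ∈ A),
        ∑ q ∈ (hatcube2 r ℓ x').filter (· ∉ A), T r α A ℓ p q := by
    rw [← hswap, Finset.sum_filter]
    exact Finset.sum_congr rfl fun p _ => hsum p
  rw [hGsum, Fq]
  split_ifs with hcond
  · -- condition holds; each `T` equals `Jint2`
    refine (Finset.sum_congr rfl fun p hp => Finset.sum_congr rfl fun q hq => ?_).symm
    simp only [Finset.mem_filter] at hp hq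
    have hxp : x = idx2 r ℓ p := idx_of_mem_hat hp.1
    have hxq : x' = idx2 r ℓ q := idx_of_mem_hat hq.1
    rw [hxp, hxq] at hcond
    have hPp : Pp r A ℓ p q :=
      ⟨hp.2, hq.2, hxp ▸ hp.1, hxq ▸ hq.1, hcond⟩
    rw [T, if_pos hPp]
  · -- condition fails; each `T` is zero
    refine (Finset.sum_eq_zero fun p hp => Finset.sum_eq_zero fun q hq => ?_).symm
    simp only [Finset.mem_filter] at hp hq
    have hxp : x = idx2 r ℓ p := idx_of_mem_hat hp.1
    have hxq : x' = idx2 r ℓ q := idx_of_mem_hat hq.1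
    rw [T, if_neg]
    intro hPp
    exact hcond (by rw [hxp, hxq]; exact hPp.2.2.2.2)

lemma hat_filter_disjoint {r ℓ : ℕ} (A : Finset (ℤ × ℤ)) {x y : ℤ × ℤ} (h : x ≠ y) :
    Disjoint ((hatcube2 r ℓ x).filter (· ∉ A)) ((hatcube2 r ℓ y).filter (· ∉ A)) := by
  rw [Finset.disjoint_left]
  intro q hqx hqy
  simp only [Finset.mem_filter] at hqx hqy
  exact h ((idx_of_mem_hat hqx.1).trans (idx_of_mem_hat hqy.1).symm)

/-- Key step : `Qlev` at scale `ℓ` is at most the total `T`-interaction. -/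
lemma key_step (r : ℕ) {α : ℝ} (hα : 2 < α) (A : Finset (ℤ × ℤ)) (ℓ : ℕ) :
    Qlev r α A ℓ ≤ ∑ p ∈ A, ∑' q : ℤ × ℤ, T r α A ℓ p q := by
  classical
  set X : Finset (ℤ × ℤ) := A.image (fun p => idx2 r ℓ p) with hX
  have h2 : ∀ x : ℤ × ℤ, ∑' x' : ℤ × ℤ, Fq r α A ℓ x x' =
      ∑ x' ∈ nbrs x, Fq r α A ℓ x x' := by
    intro x
    apply tsum_eq_sum
    intro x' hx'
    rw [Fq, if_neg]
    intro hcond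
    exact hx' (mem_nbrs_of_adj hcond.1)
  have h3 : ∀ x : ℤ × ℤ, x ∉ X → ∑ x' ∈ nbrs x, Fq r α A ℓ x x' = 0 := by
    intro x hx
    apply Finset.sum_eq_zero
    intro x' _
    rw [Fq]
    split_ifs with hcond
    · apply Finset.sum_eq_zero
      intro p hp
      exfalso
      simp only [Finset.mem_filter] at hp
      exact hx (Finset.mem_image.2 ⟨p, hp.2, (idx_of_mem_hat hp.1).symm⟩)
    · rfl
  rw [Qlev_eq_Fq, tsum_congr h2, tsum_eq_sum h3]
  calc ∑ x ∈ X, ∑ x' ∈ nbrs x, Fq r α A ℓ x x'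
      = ∑ x ∈ X, ∑ x' ∈ nbrs x, ∑ p ∈ A, Gq r α A ℓ p x x' :=
        Finset.sum_congr rfl fun x _ =>
          Finset.sum_congr rfl fun x' _ => Fq_eq_sum r α A ℓ x x'
    _ = ∑ x ∈ X, ∑ p ∈ A, ∑ x' ∈ nbrs x, Gq r α A ℓ p x x' :=
        Finset.sum_congr rfl fun x _ => Finset.sum_comm
    _ = ∑ p ∈ A, ∑ x ∈ X, ∑ x' ∈ nbrs x, Gq r α A ℓ p x x' := Finset.sum_comm
    _ ≤ ∑ p ∈ A, ∑' q : ℤ × ℤ, T r α A ℓ p q := ?_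
  apply Finset.sum_le_sum
  intro p hp
  have hcollapse : ∑ x ∈ X, ∑ x' ∈ nbrs x, Gq r α A ℓ p x x' =
      ∑ x' ∈ nbrs (idx2 r ℓ p), Gq r α A ℓ p (idx2 r ℓ p) x' := by
    apply Finset.sum_eq_single_of_mem (idx2 r ℓ p) (Finset.mem_image.2 ⟨p, hp, rfl⟩)
    intro x _ hne
    apply Finset.sum_eq_zero
    intro x' _
    rw [Gq, if_neg]
    intro hmem
    exact hne (idx_of_mem_hat hmem)
  rw [hcollapse]
  have h5 : ∀ x' ∈ nbrs (idx2 r ℓ p), Gq r α A ℓ p (idx2 r ℓ p) x' ≤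
      ∑ q ∈ (hatcube2 r ℓ x').filter (· ∉ A), T r α A ℓ p q := by
    intro x' _
    rw [Gq]
    split_ifs
    · exact le_refl _
    · exact Finset.sum_nonneg fun q _ => T_nonneg r α A ℓ p q
  refine le_trans (Finset.sum_le_sum h5) ?_
  have hdisj : Set.PairwiseDisjoint ↑(nbrs (idx2 r ℓ p))
      (fun x' => (hatcube2 r ℓ x').filter (· ∉ A)) := by
    intro a _ b _ hab
    exact hat_filter_disjoint A hab
  rw [← Finset.sum_biUnion hdisj]
  exact Summable.sum_le_tsum _ (fun q _ => T_nonneg r α A ℓ p q) (T_summable r hα A ℓ p)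

end Stmt11Aux

theorem stmt11 (r : ℕ) (hr : 4 < r) (α : ℝ) (hα1 : 2 < α) (hα2 : α ≤ 3)
    (A : Finset (ℤ × ℤ)) :
    ∑' ℓ : ℕ, Qlev r α A ℓ ≤
      ∑ p ∈ A, ∑' q : ℤ × ℤ, if q ∈ A then 0 else Jint2 α p q := by
  classical
  open Stmt11Aux in
  have hRnonneg : ∀ p q : ℤ × ℤ, (0:ℝ) ≤ if q ∈ A then 0 else Jint2 α p q := by
    intro p q
    split_ifs
    · exact le_refl 0
    · exact jint_nonneg α p q
  have hRsum : ∀ p : ℤ × ℤ, Summable fun q : ℤ × ℤ => if q ∈ A then 0 else Jint2 α p q := by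
    intro p
    refine Summable.of_nonneg_of_le (hRnonneg p) (fun q => ?_) (jint_summable hα1 p)
    split_ifs
    · exact jint_nonneg α p q
    · exact le_refl _
  apply Real.tsum_le_of_sum_range_le (fun ℓ => Stmt11Aux.Qlev_nonneg r α A ℓ)
  intro L
  calc ∑ ℓ ∈ Finset.range L, Qlev r α A ℓ
      ≤ ∑ ℓ ∈ Finset.range L, ∑ p ∈ A, ∑' q : ℤ × ℤ, Stmt11Aux.T r α A ℓ p q :=
        Finset.sum_le_sum fun ℓ _ => Stmt11Aux.key_step r hα1 A ℓ
    _ = ∑ p ∈ A, ∑ ℓ ∈ Finset.range L, ∑' q : ℤ × ℤ, Stmt11Aux.T r α A ℓ p q :=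
        Finset.sum_comm
    _ = ∑ p ∈ A, ∑' q : ℤ × ℤ, ∑ ℓ ∈ Finset.range L, Stmt11Aux.T r α A ℓ p q := by
        refine Finset.sum_congr rfl fun p _ => ?_
        exact (Summable.tsum_finsetSum fun ℓ _ => Stmt11Aux.T_summable r hα1 A ℓ p).symm
    _ ≤ ∑ p ∈ A, ∑' q : ℤ × ℤ, if q ∈ A then 0 else Jint2 α p q := ?_
  apply Finset.sum_le_sum
  intro p _
  refine Summable.tsum_le_tsum (fun q => ?_)
    (summable_sum fun ℓ _ => Stmt11Aux.T_summable r hα1 A ℓ p) (hRsum p)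
  by_cases hqA : q ∈ A
  · rw [if_pos hqA]
    rw [Finset.sum_eq_zero]
    intro ℓ _
    rw [Stmt11Aux.T, if_neg]
    intro h
    exact h.2.1 hqA
  · rw [if_neg hqA]
    by_cases hex : ∃ ℓ0 ∈ Finset.range L, Stmt11Aux.T r α A ℓ0 p q ≠ 0
    · obtain ⟨ℓ0, hℓ0, hne⟩ := hex
      have hP0 : Stmt11Aux.Pp r A ℓ0 p q := by
        by_contra h
        rw [Stmt11Aux.T, if_neg h] at hne
        exact hne rfl
      have hsingle : ∑ ℓ ∈ Finset.range L, Stmt11Aux.T r α A ℓ p q =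
          Stmt11Aux.T r α A ℓ0 p q := by
        apply Finset.sum_eq_single_of_mem ℓ0 hℓ0
        intro ℓ _ hℓne
        rw [Stmt11Aux.T, if_neg]
        intro hP
        rcases lt_or_gt_of_ne hℓne with h | h
        · exact Stmt11Aux.scale_unique h hP hP0
        · exact Stmt11Aux.scale_unique h hP0 hP
      rw [hsingle, Stmt11Aux.T, if_pos hP0]
    · push_neg at hex
      rw [Finset.sum_eq_zero (fun ℓ hℓ => hex ℓ hℓ)]
      exact jint_nonneg α p q
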